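/- Let π: ℝ → ℝ be bounded measurable, χ(t) = ∫_{-∞}^{t} e^{−(t−s)} π(s) ds, τ ∈ ℝ, η ∈ ℝ, and ε₀ > 0. Suppose |π(s + τ) − π(s)| ≥ ε₀ for all s ∈ [η, η + 1) and |χ(η + τ) − χ(η)| < ε₀/8, and suppose π(s+τ) − π(s) does not change sign on [η, η+1). Then there exists 0 < κ < 1 such that |χ(t + τ) − χ(t)| ≥ ε₀/24 for all t ∈ [η + κ, η + 1). -/

import Mathlib

open MeasureTheory

/-- `χ(t) = ∫_{-∞}^t e^{-(t-s)} π(s) ds`. -/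
noncomputable def chi (π : ℝ → ℝ) (t : ℝ) : ℝ :=
  ∫ s in Set.Iic t, Real.exp (-(t - s)) * π s

private lemma intAux (g : ℝ → ℝ) (M : ℝ) (hmeas : Measurable g) (hbd : ∀ t, |g t| ≤ M)
    (c t : ℝ) : IntegrableOn (fun s => Real.exp (-(c - s)) * g s) (Set.Iic t) := by
  have h1 : IntegrableOn (fun s => Real.exp (-(c - s))) (Set.Iic t) := by
    have h := (integrableOn_exp_Iic t).mul_const (Real.exp (-c))
    refine MeasureTheory.IntegrableOn.congr_fun h (fun s _ => ?_) measurableSet_Iic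
    rw [← Real.exp_add]; ring_nf
  have h2 : IntegrableOn (fun s => g s * Real.exp (-(c - s))) (Set.Iic t) := by
    refine h1.bdd_mul (c := M) hmeas.aestronglyMeasurable.restrict (ae_of_all _ (fun x => ?_))
    simpa [Real.norm_eq_abs] using hbd x
  refine MeasureTheory.IntegrableOn.congr_fun h2 (fun s _ => ?_) measurableSet_Iic
  ring

private lemma chi_shift (π : ℝ → ℝ) (t τ : ℝ) :
    chi π (t + τ) = ∫ s in Set.Iic t, Real.exp (-(t - s)) * π (s + τ) := by
  unfold chi
  have hmp : MeasurePreserving (fun s : ℝ => s + τ) volume volume :=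
    measurePreserving_add_right volume τ
  have hemb : MeasurableEmbedding (fun s : ℝ => s + τ) :=
    (MeasurableEquiv.addRight τ).measurableEmbedding
  have key := hmp.setIntegral_preimage_emb hemb
    (fun s => Real.exp (-(t + τ - s)) * π s) (Set.Iic (t + τ))
  have hpre : (fun s : ℝ => s + τ) ⁻¹' Set.Iic (t + τ) = Set.Iic t := by
    ext x; simp
  rw [hpre] at key
  rw [← key]
  refine setIntegral_congr_fun measurableSet_Iic (fun s _ => ?_)
  have : t + τ - (s + τ) = t - s := by ring
  rw [this]

private lemma split_lemma (g : ℝ → ℝ) (M : ℝ) (hmeas : Measurable g) (hbd : ∀ t, |g t| ≤ M)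
    (η t : ℝ) (h : η ≤ t) :
    (∫ s in Set.Iic t, Real.exp (-(t - s)) * g s)
      = Real.exp (-(t - η)) * (∫ s in Set.Iic η, Real.exp (-(η - s)) * g s)
        + ∫ s in Set.Ioc η t, Real.exp (-(t - s)) * g s := by
  rw [← Set.Iic_union_Ioc_eq_Iic h,
    setIntegral_union (Set.Iic_disjoint_Ioc le_rfl) measurableSet_Ioc
      ((intAux g M hmeas hbd t t).mono_set (Set.Iic_subset_Iic.mpr h))
      ((intAux g M hmeas hbd t t).mono_set Set.Ioc_subset_Iic_self)]
  congr 1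
  rw [← integral_const_mul]
  refine setIntegral_congr_fun measurableSet_Iic (fun s _ => ?_)
  rw [← mul_assoc, ← Real.exp_add]
  ring_nf

set_option maxHeartbeats 1000000 in
/-- Case (i): if `|π(s+τ) - π(s)| ≥ ε₀` on `[η, η+1)` (without sign change) while
`|χ(η+τ) - χ(η)| < ε₀/8`, then `|χ(t+τ) - χ(t)| ≥ ε₀/24` on `[η+κ, η+1)` for some
`0 < κ < 1`. -/
theorem chi_separation_case_i (π : ℝ → ℝ) (M : ℝ)
    (hmeas : Measurable π) (hbd : ∀ t, |π t| ≤ M)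
    (τ η ε₀ : ℝ) (hε₀ : 0 < ε₀)
    (hsep : ∀ s ∈ Set.Ico η (η + 1), ε₀ ≤ |π (s + τ) - π s|)
    (hsign : (∀ s ∈ Set.Ico η (η + 1), 0 ≤ π (s + τ) - π s) ∨
             (∀ s ∈ Set.Ico η (η + 1), π (s + τ) - π s ≤ 0))
    (hsmall : |chi π (η + τ) - chi π η| < ε₀ / 8) :
    ∃ κ : ℝ, 0 < κ ∧ κ < 1 ∧
      ∀ t ∈ Set.Ico (η + κ) (η + 1), ε₀ / 24 ≤ |chi π (t + τ) - chi π t| := by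
  set Δ : ℝ → ℝ := fun s => π (s + τ) - π s with hΔ
  have hΔmeas : Measurable Δ := (hmeas.comp (measurable_add_const τ)).sub hmeas
  have hΔbd : ∀ s, |Δ s| ≤ M + M := fun s =>
    (abs_sub _ _).trans (add_le_add (hbd _) (hbd _))
  -- D t = ∫_{Iic t} e^{-(t-s)} Δ s
  have hD : ∀ t : ℝ, chi π (t + τ) - chi π t
      = ∫ s in Set.Iic t, Real.exp (-(t - s)) * Δ s := by
    intro t
    rw [chi_shift]
    unfold chi
    rw [← integral_sub (intAux (fun s => π (s + τ)) M (hmeas.comp (measurable_add_const τ))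
        (fun s => hbd _) t t) (intAux π M hmeas hbd t t)]
    refine setIntegral_congr_fun measurableSet_Iic (fun s _ => ?_)
    simp only [hΔ]; ring
  refine ⟨1/5, by norm_num, by norm_num, fun t ht => ?_⟩
  obtain ⟨ht1, ht2⟩ := ht
  have hηt : η ≤ t := by linarith
  have hvoc : chi π (t + τ) - chi π t
      = Real.exp (-(t - η)) * (chi π (η + τ) - chi π η)
        + ∫ s in Set.Ioc η t, Real.exp (-(t - s)) * Δ s := by
    rw [hD t, hD η, split_lemma Δ (M + M) hΔmeas hΔbd η t hηt]
  -- compute ∫_{Ioc η t} e^{-(t-s)} = 1 - e^{-(t-η)}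
  have hexpint : (∫ s in Set.Ioc η t, Real.exp (-(t - s)))
      = 1 - Real.exp (-(t - η)) := by
    rw [← intervalIntegral.integral_of_le hηt]
    have : (fun s => Real.exp (-(t - s))) = fun s => Real.exp (s - t) := by
      funext s; ring_nf
    rw [this, intervalIntegral.integral_comp_sub_right (fun x => Real.exp x) t,
      integral_exp]
    simp
  set e := Real.exp (-(t - η)) with he
  have hIoc_sub : Set.Ioc η t ⊆ Set.Ico η (η + 1) := fun s hs =>
    ⟨le_of_lt hs.1, lt_of_le_of_lt hs.2 ht2⟩
  have hintΔ : IntegrableOn (fun s => Real.exp (-(t - s)) * Δ s) (Set.Ioc η t) :=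
    (intAux Δ (M + M) hΔmeas hΔbd t t).mono_set Set.Ioc_subset_Iic_self
  have hintc : IntegrableOn (fun s => Real.exp (-(t - s)) * ε₀) (Set.Ioc η t) :=
    (Continuous.integrableOn_Ioc (by continuity))
  have hconstint : (∫ s in Set.Ioc η t, Real.exp (-(t - s)) * ε₀) = ε₀ * (1 - e) := by
    have : (∫ s in Set.Ioc η t, Real.exp (-(t - s)) * ε₀)
        = (∫ s in Set.Ioc η t, Real.exp (-(t - s))) * ε₀ := by
      rw [← integral_mul_const]
    rw [this, hexpint]; ring
  -- lower bound on the integral term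
  have hI : ε₀ * (1 - e) ≤ |∫ s in Set.Ioc η t, Real.exp (-(t - s)) * Δ s| := by
    rcases hsign with hpos | hneg
    · have hge : ∀ s ∈ Set.Ioc η t, Real.exp (-(t - s)) * ε₀
          ≤ Real.exp (-(t - s)) * Δ s := by
        intro s hs
        have h1 := hsep s (hIoc_sub hs)
        have h2 := hpos s (hIoc_sub hs)
        have : ε₀ ≤ Δ s := by simp only [hΔ]; rw [abs_of_nonneg h2] at h1; exact h1
        exact mul_le_mul_of_nonneg_left this (Real.exp_pos _).le
      have := setIntegral_mono_on hintc hintΔ measurableSet_Ioc hge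
      rw [hconstint] at this
      exact this.trans (le_abs_self _)
    · have hge : ∀ s ∈ Set.Ioc η t, Real.exp (-(t - s)) * Δ s
          ≤ Real.exp (-(t - s)) * (-ε₀) := by
        intro s hs
        have h1 := hsep s (hIoc_sub hs)
        have h2 := hneg s (hIoc_sub hs)
        have : Δ s ≤ -ε₀ := by simp only [hΔ]; rw [abs_of_nonpos h2] at h1; linarith
        exact mul_le_mul_of_nonneg_left this (Real.exp_pos _).le
      have hintc' : IntegrableOn (fun s => Real.exp (-(t - s)) * (-ε₀)) (Set.Ioc η t) :=
        (Continuous.integrableOn_Ioc (by continuity))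
      have h := setIntegral_mono_on hintΔ hintc' measurableSet_Ioc hge
      have hcv : (∫ s in Set.Ioc η t, Real.exp (-(t - s)) * (-ε₀)) = -(ε₀ * (1 - e)) := by
        have : (∫ s in Set.Ioc η t, Real.exp (-(t - s)) * (-ε₀))
            = (∫ s in Set.Ioc η t, Real.exp (-(t - s))) * (-ε₀) := by
          rw [← integral_mul_const]
        rw [this, hexpint]; ring
      rw [hcv] at h
      calc ε₀ * (1 - e) ≤ -(∫ s in Set.Ioc η t, Real.exp (-(t - s)) * Δ s) := by linarith
        _ ≤ |∫ s in Set.Ioc η t, Real.exp (-(t - s)) * Δ s| := neg_le_abs _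
  -- bound e ≤ 5/6
  have heκ : e ≤ 5/6 := by
    have h1 : Real.exp (-(t - η)) ≤ Real.exp (-(1/5 : ℝ)) :=
      Real.exp_le_exp.mpr (by linarith)
    have h2 : (6/5 : ℝ) ≤ Real.exp (1/5) := by
      have := Real.add_one_le_exp (1/5 : ℝ); linarith
    have h3 : Real.exp (-(1/5 : ℝ)) ≤ 5/6 := by
      rw [Real.exp_neg, inv_le_comm₀ (Real.exp_pos _) (by norm_num : (0:ℝ) < 5/6)]
      norm_num
      linarith
    exact h1.trans h3
  have hepos : (0:ℝ) < e := Real.exp_pos _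
  have he1 : e ≤ 1 := Real.exp_le_one_iff.mpr (by linarith)
  -- final estimate
  rw [hvoc]
  have habs : |e * (chi π (η + τ) - chi π η)| ≤ ε₀ / 8 := by
    rw [abs_mul, abs_of_pos hepos]
    calc e * |chi π (η + τ) - chi π η| ≤ 1 * (ε₀ / 8) := by
          apply mul_le_mul he1 hsmall.le (abs_nonneg _) one_pos.le
      _ = ε₀ / 8 := one_mul _
  have := abs_sub_abs_le_abs_sub (∫ s in Set.Ioc η t, Real.exp (-(t - s)) * Δ s)
    (-(e * (chi π (η + τ) - chi π η)))
  have habs2 : |(∫ s in Set.Ioc η t, Real.exp (-(t - s)) * Δ s)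
      - -(e * (chi π (η + τ) - chi π η))|
      = |e * (chi π (η + τ) - chi π η) + ∫ s in Set.Ioc η t, Real.exp (-(t - s)) * Δ s| := by
    rw [sub_neg_eq_add, add_comm]
  rw [habs2, abs_neg] at this
  nlinarith [this, hI, habs, hε₀.le]
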